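/- Let G be an n-vertex graph with minimum degree f' and conductance Φ(G) ≥ φ, where f' ≥ 2f/φ and φ > 0. Then for every f-degree fault set F, the graph G \ F has conductance at least φ/2 (it is a φ/2-expander), where the conductance of G \ F is computed with respect to its own degrees; in particular, G \ F is connected. -/

import Mathlib

open SimpleGraph

/-- `F` has faulty-degree at most `f`: every vertex is incident to at most `f` edges of `F`. -/
def DegLE {V : Type} (F : Set (Sym2 V)) (f : ℕ) : Prop :=
  ∀ v : V, {e ∈ F | v ∈ e}.ncard ≤ f

/-- The volume of a vertex set `S`: the sum of the degrees (in `G`) of the vertices of `S`. -/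
noncomputable def vol {V : Type} (G : SimpleGraph V) (S : Finset V) : ℕ :=
  ∑ v ∈ S, (G.neighborSet v).ncard

/-- The set of edges of `G` with exactly one endpoint in `S`. -/
def edgeBoundary {V : Type} (G : SimpleGraph V) (S : Finset V) : Set (Sym2 V) :=
  {e | e ∈ G.edgeSet ∧ ∃ u v : V, e = s(u, v) ∧ u ∈ S ∧ v ∉ S}

/-- The conductance of the cut `S` in `G`. -/
noncomputable def cutConductance {V : Type} [Fintype V] [DecidableEq V]
    (G : SimpleGraph V) (S : Finset V) : ℝ :=
  (edgeBoundary G S).ncard / (min (vol G S) (vol G Sᶜ) : ℕ)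

/-- `G` is a `φ`-expander: every nonempty proper cut has conductance at least `φ`. -/
def IsExpander {V : Type} [Fintype V] [DecidableEq V] (G : SimpleGraph V) (φ : ℝ) : Prop :=
  ∀ S : Finset V, S.Nonempty → S ≠ Finset.univ → φ ≤ cutConductance G S

section Aux

variable {V : Type} [Fintype V] [DecidableEq V]

private lemma ncard_biUnion_le {α β : Type*} [Finite β] (T : Finset α) (g : α → Set β) :
    (⋃ v ∈ T, g v).ncard ≤ ∑ v ∈ T, (g v).ncard := by
  classical
  induction T using Finset.induction_on with
  | empty => simp
  | insert _ _ h ih =>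
    rw [Finset.sum_insert h, Finset.set_biUnion_insert]
    exact le_trans (Set.ncard_union_le _ _) (add_le_add_right ih _)

private lemma edgeBoundary_compl (G : SimpleGraph V) (S : Finset V) :
    edgeBoundary G Sᶜ = edgeBoundary G S := by
  ext e
  constructor
  · rintro ⟨he, u, v, rfl, hu, hv⟩
    exact ⟨he, v, u, Sym2.eq_swap, by simpa using hv, by simpa using hu⟩
  · rintro ⟨he, u, v, rfl, hu, hv⟩
    exact ⟨he, v, u, Sym2.eq_swap, by simpa using hv, by simpa using hu⟩

private lemma boundary_le_vol (G : SimpleGraph V) (S : Finset V) :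
    (edgeBoundary G S).ncard ≤ vol G S := by
  have hsub : edgeBoundary G S ⊆ ⋃ v ∈ S, G.incidenceSet v := by
    rintro e ⟨he, u, v, rfl, hu, hv⟩
    exact Set.mem_biUnion hu ⟨he, Sym2.mem_mk_left u v⟩
  calc (edgeBoundary G S).ncard ≤ (⋃ v ∈ S, G.incidenceSet v).ncard :=
        Set.ncard_le_ncard hsub (Set.toFinite _)
    _ ≤ ∑ v ∈ S, (G.incidenceSet v).ncard := ncard_biUnion_le _ _
    _ = vol G S := Finset.sum_congr rfl fun v _ => by
        simp only [← Nat.card_coe_set_eq]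
        exact Nat.card_congr (G.incidenceSetEquivNeighborSet v)

private lemma inter_fault_le {F : Set (Sym2 V)} {f : ℕ} (hdeg : DegLE F f)
    (G : SimpleGraph V) (S : Finset V) :
    (edgeBoundary G S ∩ F).ncard ≤ f * S.card := by
  have hsub : edgeBoundary G S ∩ F ⊆ ⋃ v ∈ S, {e ∈ F | v ∈ e} := by
    rintro e ⟨⟨he, u, v, rfl, hu, hv⟩, hFe⟩
    exact Set.mem_biUnion hu ⟨hFe, Sym2.mem_mk_left u v⟩
  calc (edgeBoundary G S ∩ F).ncard ≤ (⋃ v ∈ S, {e ∈ F | v ∈ e}).ncard :=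
        Set.ncard_le_ncard hsub (Set.toFinite _)
    _ ≤ ∑ v ∈ S, {e ∈ F | v ∈ e}.ncard := ncard_biUnion_le _ _
    _ ≤ ∑ _v ∈ S, f := Finset.sum_le_sum fun v _ => hdeg v
    _ = f * S.card := by rw [Finset.sum_const, smul_eq_mul, mul_comm]

private lemma vol_deleteEdges_le (G : SimpleGraph V) (F : Set (Sym2 V)) (S : Finset V) :
    vol (G.deleteEdges F) S ≤ vol G S :=
  Finset.sum_le_sum fun v _ => Set.ncard_le_ncard
    (fun x hx => (SimpleGraph.deleteEdges_adj.mp hx).1) (Set.toFinite _)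

private lemma edgeBoundary_deleteEdges (G : SimpleGraph V) (F : Set (Sym2 V)) (S : Finset V) :
    edgeBoundary (G.deleteEdges F) S = edgeBoundary G S \ F := by
  ext e
  simp only [edgeBoundary, SimpleGraph.edgeSet_deleteEdges, Set.mem_diff, Set.mem_setOf_eq]
  tauto

end Aux

/-- A `φ`-expander with minimum degree `f' ≥ 2f/φ` remains a
`φ/2`-expander (in particular, stays connected) after deleting any `f`-degree fault set. -/
theorem expander_rigid_to_bounded_degree_faults {V : Type} [Fintype V] [DecidableEq V]
    [Nonempty V] (G : SimpleGraph V) (φ : ℝ) (f f' : ℕ)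
    (hφ : 0 < φ)
    (hf' : 2 * (f : ℝ) / φ ≤ f')
    (hmindeg : ∀ v : V, f' ≤ (G.neighborSet v).ncard)
    (hexp : IsExpander G φ)
    (F : Set (Sym2 V)) (hF : F ⊆ G.edgeSet) (hdeg : DegLE F f) :
    IsExpander (G.deleteEdges F) (φ / 2) ∧ (G.deleteEdges F).Connected := by
  set H := G.deleteEdges F with hH
  -- key estimate, for the side of smaller volume
  have key : ∀ S : Finset V, S.Nonempty → S ≠ Finset.univ → vol G S ≤ vol G Sᶜ →
      φ / 2 * (vol G S : ℝ) ≤ ((edgeBoundary H S).ncard : ℝ) := by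
    intro S hSne hSuniv hSmall
    have hexpS := hexp S hSne hSuniv
    rw [cutConductance, min_eq_left hSmall] at hexpS
    have hμpos : 0 < vol G S := by
      by_contra h
      push_neg at h
      rw [Nat.le_zero.mp h] at hexpS
      simp at hexpS
      linarith
    have hμR : (0:ℝ) < (vol G S : ℝ) := by exact_mod_cast hμpos
    have hbG : φ * (vol G S : ℝ) ≤ ((edgeBoundary G S).ncard : ℝ) :=
      (le_div_iff₀ hμR).mp hexpS
    have hbF : ((edgeBoundary G S ∩ F).ncard : ℝ) ≤ (f : ℝ) * S.card := by
      exact_mod_cast inter_fault_le hdeg G S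
    have hvolS : (f' : ℝ) * S.card ≤ (vol G S : ℝ) := by
      have : f' * S.card ≤ vol G S := by
        calc f' * S.card = ∑ _v ∈ S, f' := by rw [Finset.sum_const, smul_eq_mul, mul_comm]
          _ ≤ vol G S := Finset.sum_le_sum fun v _ => hmindeg v
      exact_mod_cast this
    have hff' : (f : ℝ) ≤ φ / 2 * f' := by
      rw [div_le_iff₀ hφ] at hf'
      nlinarith
    have hcard0 : (0:ℝ) ≤ (S.card : ℝ) := by positivity
    have h1 : ((edgeBoundary G S ∩ F).ncard : ℝ) ≤ φ / 2 * (vol G S : ℝ) := by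
      calc ((edgeBoundary G S ∩ F).ncard : ℝ) ≤ (f : ℝ) * S.card := hbF
        _ ≤ (φ / 2 * f') * S.card := by nlinarith
        _ ≤ φ / 2 * (vol G S : ℝ) := by nlinarith
    have hdiff : (edgeBoundary G S).ncard ≤
        (edgeBoundary G S \ F).ncard + (edgeBoundary G S ∩ F).ncard := by
      refine le_trans (Set.ncard_le_ncard ?_ (Set.toFinite _)) (Set.ncard_union_le _ _)
      intro e he
      by_cases hFe : e ∈ F
      · exact Or.inr ⟨he, hFe⟩
      · exact Or.inl ⟨he, hFe⟩
    have hdiffR : ((edgeBoundary G S).ncard : ℝ) ≤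
        ((edgeBoundary G S \ F).ncard : ℝ) + ((edgeBoundary G S ∩ F).ncard : ℝ) := by
      exact_mod_cast hdiff
    rw [hH, edgeBoundary_deleteEdges]
    linarith
  have hexpH : IsExpander H (φ / 2) := by
    intro S hSne hSuniv
    have hb1 : (edgeBoundary H S).ncard ≤ vol H S := boundary_le_vol H S
    have hb2 : (edgeBoundary H S).ncard ≤ vol H Sᶜ := by
      rw [← edgeBoundary_compl H S]
      exact boundary_le_vol H Sᶜ
    have ending : ∀ μ : ℕ, 0 < μ → min (vol H S) (vol H Sᶜ) ≤ μ →
        φ / 2 * (μ : ℝ) ≤ ((edgeBoundary H S).ncard : ℝ) → φ / 2 ≤ cutConductance H S := by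
      intro μ hμ hle hkey
      have hμR : (0:ℝ) < (μ : ℝ) := by exact_mod_cast hμ
      have hbpos : 0 < (edgeBoundary H S).ncard := by
        have : (0:ℝ) < ((edgeBoundary H S).ncard : ℝ) := by nlinarith
        exact_mod_cast this
      have hminpos : 0 < min (vol H S) (vol H Sᶜ) :=
        lt_min (hbpos.trans_le hb1) (hbpos.trans_le hb2)
      rw [cutConductance, le_div_iff₀ (by exact_mod_cast hminpos)]
      have hleR : ((min (vol H S) (vol H Sᶜ) : ℕ) : ℝ) ≤ (μ : ℝ) := by exact_mod_cast hle
      nlinarith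
    rcases le_total (vol G S) (vol G Sᶜ) with hle | hle
    · refine ending (vol G S) ?_ ?_ (key S hSne hSuniv hle)
      · by_contra h
        push_neg at h
        have h0 : vol G S = 0 := Nat.le_zero.mp h
        have := hexp S hSne hSuniv
        rw [cutConductance, min_eq_left hle, h0] at this
        simp at this
        linarith
      · exact (min_le_left _ _).trans (vol_deleteEdges_le G F S)
    · have hCne : Sᶜ.Nonempty := (Finset.compl_ne_univ_iff_nonempty Sᶜ).mp (by rwa [compl_compl])
      have hCuniv : Sᶜ ≠ Finset.univ :=
        (Finset.compl_ne_univ_iff_nonempty S).mpr hSne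
      have hsmall : vol G Sᶜ ≤ vol G Sᶜᶜ := by rw [compl_compl]; exact hle
      have hkey := key Sᶜ hCne hCuniv hsmall
      rw [edgeBoundary_compl H S] at hkey
      refine ending (vol G Sᶜ) ?_ ?_ hkey
      · by_contra h
        push_neg at h
        have h0 : vol G Sᶜ = 0 := Nat.le_zero.mp h
        have := hexp S hSne hSuniv
        rw [cutConductance, min_eq_right hle, h0] at this
        simp at this
        linarith
      · exact (min_le_right _ _).trans (vol_deleteEdges_le G F Sᶜ)
  refine ⟨hexpH, ?_⟩
  rw [connected_iff]
  refine ⟨fun u v => ?_, inferInstance⟩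
  classical
  by_contra hreach
  set S : Finset V := Finset.univ.filter (fun w => H.Reachable u w) with hS
  have hu : u ∈ S := Finset.mem_filter.mpr ⟨Finset.mem_univ u, Reachable.refl u⟩
  have hSuniv : S ≠ Finset.univ := by
    intro h
    apply hreach
    have hv : v ∈ S := h ▸ Finset.mem_univ v
    simpa [hS] using hv
  have hcut := hexpH S ⟨u, hu⟩ hSuniv
  have hempty : edgeBoundary H S = ∅ := by
    rw [Set.eq_empty_iff_forall_notMem]
    rintro e ⟨he, a, b, rfl, ha, hb⟩
    apply hb
    have hadj : H.Adj a b := (H.mem_edgeSet).mp he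
    have hra : H.Reachable u a := by simpa [hS] using ha
    simp only [hS, Finset.mem_filter, Finset.mem_univ, true_and]
    exact hra.trans hadj.reachable
  rw [cutConductance, hempty] at hcut
  simp at hcut
  linarith
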